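/- arXiv:1009.0125 — 3 statements merged into one kernel-verified Lean document; each statement's English description precedes it below -/
import Mathlib

section
/- Let K ⊆ ℝⁿ be compact and μ a finite Borel measure with supp μ = K. A continuous function f : ℝⁿ → ℝ is nonnegative on K if and only if ∫_K g² f dμ ≥ 0 for every polynomial g ∈ ℝ[x₁,…,xₙ]. -/
open MeasureTheory

set_option maxHeartbeats 1000000

lemma eval_aux {n m : ℕ} (c : ℝ) (x0 x : Fin n → ℝ) :
    MvPolynomial.eval x ((MvPolynomial.C c
      - ∑ i, (MvPolynomial.X i - MvPolynomial.C (x0 i)) ^ 2) ^ m)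
    = (c - ∑ i, (x i - x0 i) ^ 2) ^ m := by
  simp

/-- `K` is the support of `μ`: the smallest closed set whose complement is `μ`-null. -/
def IsMeasureSupport {X : Type*} [TopologicalSpace X] [MeasurableSpace X]
    (μ : Measure X) (K : Set X) : Prop :=
  IsClosed K ∧ μ Kᶜ = 0 ∧ ∀ F : Set X, IsClosed F → μ Fᶜ = 0 → K ⊆ F

theorem stmt3 {n : ℕ} (K : Set (Fin n → ℝ)) (hK : IsCompact K)
    (μ : Measure (Fin n → ℝ)) [IsFiniteMeasure μ] (hsupp : IsMeasureSupport μ K)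
    (f : (Fin n → ℝ) → ℝ) (hf : Continuous f) :
    (∀ x ∈ K, 0 ≤ f x) ↔
      ∀ g : MvPolynomial (Fin n) ℝ,
        0 ≤ ∫ x in K, (MvPolynomial.eval x g) ^ 2 * f x ∂μ := by
  constructor
  · intro h g
    apply setIntegral_nonneg hK.isClosed.measurableSet
    intro x hx
    exact mul_nonneg (sq_nonneg _) (h x hx)
  · intro h x0 hx0
    by_contra hneg
    push_neg at hneg
    set ε : ℝ := -f x0 / 2 with hε
    have hε0 : 0 < ε := by simp [hε]; linarith
    -- continuity of f at x0
    obtain ⟨r, hr0, hr⟩ : ∃ r > 0, ∀ x, dist x x0 < r → f x < -ε := by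
      have hca : ContinuousAt f x0 := hf.continuousAt
      obtain ⟨δ, hδ0, hδ⟩ := Metric.continuousAt_iff.1 hca ε hε0
      refine ⟨δ, hδ0, fun x hx => ?_⟩
      have := hδ hx
      rw [Real.dist_eq] at this
      have := abs_lt.1 this
      linarith [this.2]
    -- the "sum of squares distance" function
    set s : (Fin n → ℝ) → ℝ := fun x => ∑ i, (x i - x0 i) ^ 2 with hs
    have hscont : Continuous s := by
      apply continuous_finset_sum
      intro i _
      exact ((continuous_apply i).sub continuous_const).pow 2
    have hs_nonneg : ∀ x, 0 ≤ s x := fun x => Finset.sum_nonneg fun i _ => sq_nonneg _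
    have hsx0 : s x0 = 0 := by simp [hs]
    -- s x < r^2 implies dist x x0 < r
    have hsmall : ∀ x, s x < r ^ 2 → dist x x0 < r := by
      intro x hx
      rw [dist_pi_lt_iff hr0]
      intro i
      rw [Real.dist_eq]
      have h1 : (x i - x0 i) ^ 2 ≤ s x :=
        Finset.single_le_sum (f := fun i => (x i - x0 i) ^ 2)
          (fun j _ => sq_nonneg _) (Finset.mem_univ i)
      nlinarith [abs_nonneg (x i - x0 i), sq_abs (x i - x0 i)]
    -- bound D for s on K
    obtain ⟨z, hzK, hz'⟩ := hK.exists_isMaxOn ⟨x0, hx0⟩ hscont.continuousOn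
    have hz : ∀ y ∈ K, s y ≤ s z := fun y hy => hz' hy
    set D : ℝ := s z with hD
    have hD0 : 0 ≤ D := by have := hs_nonneg z; linarith
    -- bound M for |f| on K
    obtain ⟨w, hwK, hw'⟩ := hK.exists_isMaxOn ⟨x0, hx0⟩ (hf.abs.continuousOn)
    have hw : ∀ y ∈ K, |f y| ≤ |f w| := fun y hy => hw' hy
    set M : ℝ := |f w| with hM
    have hM0 : 0 ≤ M := abs_nonneg _
    set c : ℝ := D + r ^ 2 with hc
    set a : ℝ := D + r ^ 2 / 2 with ha
    set b : ℝ := D with hb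
    have hba : b < a := by simp [ha, hb]; positivity
    have ha0 : 0 < a := by positivity
    -- positive measure of the small set
    set W : Set (Fin n → ℝ) := {x | s x < r ^ 2 / 2} with hW
    have hWopen : IsOpen W := isOpen_lt hscont continuous_const
    have hx0W : x0 ∈ W := by simp [hW, hsx0]; positivity
    have hμW : 0 < μ (K ∩ W) := by
      rcases eq_or_lt_of_le (zero_le : 0 ≤ μ (K ∩ W)) with hz0 | h'
      · exfalso
        have hμW0 : μ W = 0 := by
          have h1 := measure_le_inter_add_diff μ W K
          have h2 : μ (W \ K) ≤ μ Kᶜ := measure_mono fun x hx => hx.2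
          rw [hsupp.2.1] at h2
          rw [Set.inter_comm] at hz0
          have : μ W ≤ 0 := by
            calc μ W ≤ μ (W ∩ K) + μ (W \ K) := h1
            _ ≤ 0 + 0 := by rw [← hz0]; exact add_le_add le_rfl h2
            _ = 0 := by simp
          exact le_antisymm this zero_le
        have := hsupp.2.2 Wᶜ hWopen.isClosed_compl (by simpa using hμW0)
        exact (this hx0) hx0W
      · exact h'
    -- the larger open set V
    set V : Set (Fin n → ℝ) := {x | s x < r ^ 2} with hV
    have hVopen : IsOpen V := isOpen_lt hscont continuous_const
    have hWV : W ⊆ V := by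
      intro x hx
      simp only [hW, Set.mem_setOf_eq] at hx
      simp only [hV, Set.mem_setOf_eq]
      nlinarith
    have hfV : ∀ x ∈ V, f x < -ε := fun x hx => hr x (hsmall x hx)
    -- the polynomial-valued function q
    set q : (Fin n → ℝ) → ℝ := fun x => c - s x with hq
    have hq0 : ∀ x ∈ K, 0 ≤ q x := by
      intro x hx
      have := hz x hx
      simp only [hq, hc]
      nlinarith
    have hqW : ∀ x ∈ W, a ≤ q x := by
      intro x hx
      simp only [hW, Set.mem_setOf_eq] at hx
      simp only [hq, ha, hc]
      linarith
    have hqVc : ∀ x, x ∉ V → q x ≤ b := by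
      intro x hx
      simp only [hV, Set.mem_setOf_eq, not_lt] at hx
      simp only [hq, hb, hc]
      linarith
    have hfM : ∀ x ∈ K, |f x| ≤ M := fun x hx => hw x hx
    -- measure quantities
    set w' : ℝ := (μ (K ∩ W)).toReal with hw'
    have hw'0 : 0 < w' := ENNReal.toReal_pos hμW.ne' (measure_ne_top μ _)
    set k' : ℝ := (μ (K \ V)).toReal with hk'
    have hk'0 : 0 ≤ k' := ENNReal.toReal_nonneg
    -- choose the exponent m
    set t : ℝ := b / a with ht
    have ht0 : 0 ≤ t := div_nonneg hD0 ha0.le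
    have ht1 : t < 1 := (div_lt_one ha0).2 hba
    obtain ⟨m, htm⟩ := exists_pow_lt_of_lt_one
      (show (0:ℝ) < ε * w' / (M * k' + 1) by positivity) ht1
    have h3 : (0:ℝ) < (a ^ m) ^ 2 := by positivity
    have hmain : M * k' * (b ^ m) ^ 2 < ε * w' * (a ^ m) ^ 2 := by
      have hbm : b ^ m = t ^ m * a ^ m := by
        rw [ht, div_pow, div_mul_cancel₀]
        positivity
      have h1 : (t ^ m) ^ 2 ≤ t ^ m := by
        nlinarith [pow_nonneg ht0 m, pow_le_one₀ ht0 ht1.le (n := m)]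
      have hMk : 0 ≤ M * k' := mul_nonneg hM0 hk'0
      have key : M * k' * (t ^ m) ^ 2 < ε * w' := by
        have e1 : M * k' * (t ^ m) ^ 2 ≤ (M * k' + 1) * t ^ m := by
          nlinarith [pow_nonneg ht0 m]
        have e2 : (M * k' + 1) * t ^ m < (M * k' + 1) * (ε * w' / (M * k' + 1)) := by
          apply mul_lt_mul_of_pos_left htm
          positivity
        have e3 : (M * k' + 1) * (ε * w' / (M * k' + 1)) = ε * w' := by
          field_simp
        linarith
      calc M * k' * (b ^ m) ^ 2 = M * k' * (t ^ m) ^ 2 * (a ^ m) ^ 2 := by rw [hbm]; ring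
        _ < (ε * w') * (a ^ m) ^ 2 := mul_lt_mul_of_pos_right key h3
        _ = ε * w' * (a ^ m) ^ 2 := rfl
    -- the polynomial
    set p : MvPolynomial (Fin n) ℝ :=
      MvPolynomial.C c - ∑ i, (MvPolynomial.X i - MvPolynomial.C (x0 i)) ^ 2 with hp
    have hpeval : ∀ x, MvPolynomial.eval x (p ^ m) = q x ^ m := fun x =>
      eval_aux c x0 x
    set φ : (Fin n → ℝ) → ℝ := fun x => (q x ^ m) ^ 2 * f x with hφ
    have hφc : Continuous φ := by
      apply Continuous.mul _ hf
      exact ((continuous_const.sub hscont).pow m).pow 2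
    have hint : IntegrableOn φ K μ := hφc.continuousOn.integrableOn_compact hK
    have hmeasK : MeasurableSet K := hK.isClosed.measurableSet
    have hmeasV : MeasurableSet V := hVopen.measurableSet
    have hmeasW : MeasurableSet W := hWopen.measurableSet
    -- split the integral
    have hsplit : ∫ x in K ∩ V, φ x ∂μ + ∫ x in K \ V, φ x ∂μ = ∫ x in K, φ x ∂μ :=
      integral_inter_add_diff hmeasV hint
    have hsplit2 : ∫ x in (K ∩ V) ∩ W, φ x ∂μ + ∫ x in (K ∩ V) \ W, φ x ∂μ
        = ∫ x in K ∩ V, φ x ∂μ :=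
      integral_inter_add_diff hmeasW (hint.mono_set Set.inter_subset_left)
    have hKVW : (K ∩ V) ∩ W = K ∩ W := by
      ext x
      constructor
      · rintro ⟨⟨h1, _⟩, h2⟩; exact ⟨h1, h2⟩
      · rintro ⟨h1, h2⟩; exact ⟨⟨h1, hWV h2⟩, h2⟩
    -- bound on K ∩ W
    have hboundW : ∫ x in K ∩ W, φ x ∂μ ≤ -(ε * (a ^ m) ^ 2) * w' := by
      have hle : ∫ x in K ∩ W, φ x ∂μ ≤ ∫ _x in K ∩ W, (-(ε * (a ^ m) ^ 2)) ∂μ := by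
        apply setIntegral_mono_on (hint.mono_set Set.inter_subset_left)
          (integrableOn_const (measure_lt_top μ _).ne)
          (hmeasK.inter hmeasW)
        intro x hx
        have hqa : a ≤ q x := hqW x hx.2
        have hfx : f x < -ε := hfV x (hWV hx.2)
        have ham : a ^ m ≤ q x ^ m := pow_le_pow_left₀ ha0.le hqa m
        have ham2 : (a ^ m) ^ 2 ≤ (q x ^ m) ^ 2 := by
          nlinarith [pow_nonneg ha0.le m]
        simp only [hφ]
        nlinarith [sq_nonneg (q x ^ m)]
      rw [setIntegral_const] at hle
      rw [smul_eq_mul] at hle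
      calc ∫ x in K ∩ W, φ x ∂μ ≤ (μ (K ∩ W)).toReal * (-(ε * (a ^ m) ^ 2)) := hle
        _ = -(ε * (a ^ m) ^ 2) * w' := by rw [hw']; ring
    -- nonpositive on (K ∩ V) \ W
    have hboundVW : ∫ x in (K ∩ V) \ W, φ x ∂μ ≤ 0 := by
      apply setIntegral_nonpos ((hmeasK.inter hmeasV).diff hmeasW)
      intro x hx
      have hfx : f x < -ε := hfV x hx.1.2
      simp only [hφ]
      apply mul_nonpos_of_nonneg_of_nonpos (sq_nonneg _)
      linarith
    -- bound on K \ V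
    have hboundKV : ∫ x in K \ V, φ x ∂μ ≤ M * (b ^ m) ^ 2 * k' := by
      have hnorm : ‖∫ x in K \ V, φ x ∂μ‖ ≤ (M * (b ^ m) ^ 2) * (μ (K \ V)).toReal := by
        apply norm_setIntegral_le_of_norm_le_const (measure_lt_top μ _)
        intro x hx
        have hqb : q x ≤ b := hqVc x hx.2
        have hq0x : 0 ≤ q x := hq0 x hx.1
        have hqm : q x ^ m ≤ b ^ m := pow_le_pow_left₀ hq0x hqb m
        have hqm2 : (q x ^ m) ^ 2 ≤ (b ^ m) ^ 2 := by
          nlinarith [pow_nonneg hq0x m]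
        have hfx : |f x| ≤ M := hfM x hx.1
        simp only [hφ, Real.norm_eq_abs]
        rw [abs_mul, abs_of_nonneg (sq_nonneg (q x ^ m))]
        calc (q x ^ m) ^ 2 * |f x| ≤ (b ^ m) ^ 2 * M :=
              mul_le_mul hqm2 hfx (abs_nonneg _) (sq_nonneg _)
          _ = M * (b ^ m) ^ 2 := by ring
      rw [hk']
      exact (le_abs_self _).trans (by rw [← Real.norm_eq_abs]; exact hnorm)
    -- conclude
    have hneg2 : ∫ x in K, φ x ∂μ < 0 := by
      have e1 : ∫ x in K ∩ V, φ x ∂μ ≤ -(ε * (a ^ m) ^ 2) * w' := by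
        rw [← hsplit2, hKVW]
        linarith
      have : ∫ x in K, φ x ∂μ ≤ -(ε * (a ^ m) ^ 2) * w' + M * (b ^ m) ^ 2 * k' := by
        rw [← hsplit]
        linarith
      nlinarith
    have hpos := h (p ^ m)
    rw [show (fun x => (MvPolynomial.eval x (p ^ m)) ^ 2 * f x) = φ from funext fun x => by
      rw [hpeval x]] at hpos
    linarith
end

section
/- Let K ⊆ ℝⁿ be compact, μ a finite Borel measure with supp μ = K, and f continuous on ℝⁿ. If f is concave and ∫_K g² f dμ ≥ 0 for all polynomials g, then f is nonnegative on the convex hull of K. -/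
open MeasureTheory

set_option maxHeartbeats 2000000 in
theorem stmt4 {n : ℕ} (K : Set (Fin n → ℝ)) (hK : IsCompact K)
    (μ : Measure (Fin n → ℝ)) [IsFiniteMeasure μ] (hsupp : IsMeasureSupport μ K)
    (f : (Fin n → ℝ) → ℝ) (hf : Continuous f)
    (hconc : ConcaveOn ℝ Set.univ f)
    (hpos : ∀ g : MvPolynomial (Fin n) ℝ,
      0 ≤ ∫ x in K, (MvPolynomial.eval x g) ^ 2 * f x ∂μ) :
    ∀ x ∈ convexHull ℝ K, 0 ≤ f x := by
  obtain ⟨hKclosed, hKnull, hKmin⟩ := hsupp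
  have key : ∀ x ∈ K, 0 ≤ f x := by
    intro x₀ hx₀
    by_contra hneg
    push_neg at hneg
    set ε : ℝ := -f x₀ / 2 with hε
    have hεpos : 0 < ε := by rw [hε]; linarith
    set Qf : (Fin n → ℝ) → ℝ := fun x => ∑ i, (x i - x₀ i) ^ 2 with hQf
    have hQcont : Continuous Qf := by
      exact continuous_finset_sum _ fun i _ => ((continuous_apply i).sub continuous_const).pow 2
    have hQnonneg : ∀ x, 0 ≤ Qf x := fun x => Finset.sum_nonneg fun i _ => sq_nonneg _
    have hQx₀ : Qf x₀ = 0 := by simp [hQf]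
    -- find δ with f ≤ -ε on {Qf < δ}
    obtain ⟨r, hr, hrf⟩ := (Metric.continuous_iff.mp hf) x₀ ε hεpos
    set δ : ℝ := r ^ 2 with hδ
    have hδpos : 0 < δ := pow_pos hr 2
    have hW : ∀ x, Qf x < δ → f x ≤ -ε := by
      intro x hx
      have hd : dist x x₀ < r := by
        rw [dist_pi_lt_iff hr]
        intro i
        have h1 : (x i - x₀ i) ^ 2 ≤ Qf x :=
          Finset.single_le_sum (f := fun i => (x i - x₀ i) ^ 2)
            (fun i _ => sq_nonneg _) (Finset.mem_univ i)
        have h2 := abs_lt_of_sq_lt_sq (lt_of_le_of_lt h1 hx) hr.le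
        rwa [Real.dist_eq]
      have h3 := hrf x hd
      rw [Real.dist_eq, abs_lt] at h3
      have : f x < f x₀ + ε := by linarith [h3.2]
      have hfx₀ : f x₀ = -2 * ε := by rw [hε]; ring
      linarith
    -- bounds on K
    obtain ⟨S, hS⟩ := hK.exists_bound_of_continuousOn hQcont.continuousOn
    obtain ⟨M₀, hM₀⟩ := hK.exists_bound_of_continuousOn hf.continuousOn
    set M : ℝ := max M₀ 1 with hM
    have hM1 : (1 : ℝ) ≤ M := le_max_right _ _
    have hMpos : 0 < M := lt_of_lt_of_le one_pos hM1
    have hMf : ∀ x ∈ K, |f x| ≤ M := fun x hx => le_trans (hM₀ x hx) (le_max_left _ _)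
    set Cc : ℝ := max S δ with hCc
    have hCcpos : 0 < Cc := lt_of_lt_of_le hδpos (le_max_right _ _)
    have hδCc : δ ≤ Cc := le_max_right _ _
    have hQK : ∀ x ∈ K, Qf x ≤ Cc := fun x hx =>
      le_trans (le_trans (le_abs_self _) (hS x hx)) (le_max_left _ _)
    set p : (Fin n → ℝ) → ℝ := fun x => 1 - Cc⁻¹ * Qf x with hp
    set a : ℝ := 1 - Cc⁻¹ * (δ / 2) with haa
    set b : ℝ := 1 - Cc⁻¹ * δ with hbb
    have hb0 : 0 ≤ b := by
      rw [hbb, sub_nonneg, inv_mul_le_iff₀ hCcpos]; simpa using hδCc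
    have hba : b < a := by
      rw [hbb, haa]
      have : Cc⁻¹ * (δ / 2) < Cc⁻¹ * δ := by
        apply mul_lt_mul_of_pos_left _ (inv_pos.mpr hCcpos); linarith
      linarith
    have ha0 : 0 < a := lt_of_le_of_lt hb0 hba
    have hpK : ∀ x ∈ K, 0 ≤ p x ∧ p x ≤ 1 := by
      intro x hx
      constructor
      · rw [hp]; simp only [sub_nonneg]
        rw [inv_mul_le_iff₀ hCcpos]; simpa using hQK x hx
      · rw [hp]; simp only []
        have : 0 ≤ Cc⁻¹ * Qf x := mul_nonneg (inv_pos.mpr hCcpos).le (hQnonneg x)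
        linarith
    have hpa : ∀ x, Qf x < δ / 2 → a ≤ p x := by
      intro x hx
      rw [hp, haa]
      have : Cc⁻¹ * Qf x ≤ Cc⁻¹ * (δ / 2) :=
        mul_le_mul_of_nonneg_left hx.le (inv_pos.mpr hCcpos).le
      linarith
    have hpb : ∀ x, δ ≤ Qf x → p x ≤ b := by
      intro x hx
      rw [hp, hbb]
      have : Cc⁻¹ * δ ≤ Cc⁻¹ * Qf x :=
        mul_le_mul_of_nonneg_left hx (inv_pos.mpr hCcpos).le
      linarith
    -- sets
    set W : Set (Fin n → ℝ) := {x | Qf x < δ} with hWdef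
    set A : Set (Fin n → ℝ) := {x | Qf x < δ / 2} with hAdef
    have hAW : A ⊆ W := fun x hx => by
      simp only [hWdef, hAdef, Set.mem_setOf_eq] at *; linarith
    have hWopen : IsOpen W := isOpen_lt hQcont continuous_const
    have hAopen : IsOpen A := isOpen_lt hQcont continuous_const
    have hKm : MeasurableSet K := hKclosed.measurableSet
    have hWm : MeasurableSet W := hWopen.measurableSet
    have hAm : MeasurableSet A := hAopen.measurableSet
    -- positive measure of K ∩ A
    have hμA : 0 < μ (K ∩ A) := by
      by_contra hcon
      push_neg at hcon
      have h0 : μ (K ∩ A) = 0 := le_antisymm hcon zero_le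
      have hA0 : μ A = 0 := by
        have hsub : A ⊆ (K ∩ A) ∪ Kᶜ := by
          intro x hx
          by_cases hxK : x ∈ K
          · exact Or.inl ⟨hxK, hx⟩
          · exact Or.inr hxK
        have h5 : μ ((K ∩ A) ∪ Kᶜ) ≤ μ (K ∩ A) + μ Kᶜ := measure_union_le _ _
        have := le_trans (measure_mono hsub) h5
        rw [h0, hKnull] at this
        simpa using this
      have hFc : IsClosed (K ∩ Aᶜ) := hKclosed.inter hAopen.isClosed_compl
      have hF0 : μ (K ∩ Aᶜ)ᶜ = 0 := by
        rw [Set.compl_inter, compl_compl]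
        have h6 : μ (Kᶜ ∪ A) ≤ μ Kᶜ + μ A := measure_union_le _ _
        rw [hKnull, hA0] at h6
        simpa using h6
      have := hKmin _ hFc hF0 hx₀
      exact this.2 (by simp [hAdef, hQx₀, hδpos])
    set c : ℝ := (μ (K ∩ A)).toReal with hc
    have hcpos : 0 < c := ENNReal.toReal_pos hμA.ne' (measure_ne_top μ _)
    set T : ℝ := (μ K).toReal with hT
    have hcT : c ≤ T :=
      ENNReal.toReal_mono (measure_ne_top μ K) (measure_mono Set.inter_subset_left)
    have hTpos : 0 < T := lt_of_lt_of_le hcpos hcT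
    have hMT : 0 < M * T := mul_pos hMpos hTpos
    obtain ⟨k, hk⟩ := exists_pow_lt_of_lt_one (div_pos (mul_pos hεpos hcpos) hMT)
      (show b / a < 1 by rw [div_lt_one ha0]; exact hba)
    set q : MvPolynomial (Fin n) ℝ := ∑ i, (MvPolynomial.X i - MvPolynomial.C (x₀ i)) ^ 2 with hq
    set g : MvPolynomial (Fin n) ℝ := (1 - MvPolynomial.C Cc⁻¹ * q) ^ k with hgdef
    have heval : ∀ x, MvPolynomial.eval x g = (p x) ^ k := by
      intro x
      simp [hgdef, hq, hp, hQf, map_sum]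
    set F : (Fin n → ℝ) → ℝ := fun x => ((p x) ^ k) ^ 2 * f x with hF
    have hmain : 0 ≤ ∫ x in K, F x ∂μ := by
      have h10 := hpos g
      have he : ∀ x, (MvPolynomial.eval x g) ^ 2 * f x = F x := fun x => by
        rw [heval, hF]
      simp only [he] at h10
      exact h10
    have hFcont : Continuous F := by
      apply Continuous.mul _ hf
      exact ((continuous_const.sub (continuous_const.mul hQcont)).pow k).pow 2
    have hFint : IntegrableOn F K μ := hFcont.continuousOn.integrableOn_compact hK
    have hsplit : ∫ x in K, F x ∂μ = (∫ x in K ∩ W, F x ∂μ) + ∫ x in K \ W, F x ∂μ := by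
      rw [← setIntegral_union (Set.disjoint_left.mpr fun x hx hx' => hx'.2 hx.2)
        (hKm.diff hWm) (hFint.mono_set Set.inter_subset_left)
        (hFint.mono_set Set.diff_subset), Set.inter_union_diff]
    have hfmem : ∀ x ∈ K ∩ W, f x ≤ -ε := fun x hx => hW x hx.2
    have hIW : (∫ x in K ∩ W, F x ∂μ) ≤ -(ε * (a ^ k) ^ 2) * c := by
      have h7 : (K ∩ W) ∩ A = K ∩ A := by
        rw [Set.inter_assoc, Set.inter_eq_right.mpr hAW]
      have hsplit2 : ∫ x in K ∩ W, F x ∂μ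
          = (∫ x in K ∩ A, F x ∂μ) + ∫ x in (K ∩ W) \ A, F x ∂μ := by
        rw [← setIntegral_union (Set.disjoint_left.mpr fun x hx hx' => hx'.2 hx.2)
          ((hKm.inter hWm).diff hAm)
          (hFint.mono_set fun x hx => hx.1)
          (hFint.mono_set fun x hx => hx.1.1), ← h7, Set.inter_union_diff]
      have h8 : (∫ x in K ∩ A, F x ∂μ) ≤ -(ε * (a ^ k) ^ 2) * c := by
        have hmono := setIntegral_mono_on (hFint.mono_set Set.inter_subset_left)
          ((integrableOn_const_iff (C := (a ^ k) ^ 2 * (-ε))).mpr (Or.inr (measure_lt_top μ _)))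
          (hKm.inter hAm) (fun x hx => by
            have hfx : f x ≤ -ε := hW x (hAW hx.2)
            have hpx : a ≤ p x := hpa x hx.2
            have hpk : a ^ k ≤ p x ^ k := pow_le_pow_left₀ ha0.le hpx k
            have hpk2 : (a ^ k) ^ 2 ≤ (p x ^ k) ^ 2 :=
              pow_le_pow_left₀ (pow_nonneg ha0.le k) hpk 2
            have h11 : (p x ^ k) ^ 2 * f x ≤ (a ^ k) ^ 2 * f x :=
              mul_le_mul_of_nonpos_right hpk2 (by linarith)
            have h12 : (a ^ k) ^ 2 * f x ≤ (a ^ k) ^ 2 * (-ε) :=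
              mul_le_mul_of_nonneg_left hfx (sq_nonneg _)
            calc F x = (p x ^ k) ^ 2 * f x := rfl
              _ ≤ (a ^ k) ^ 2 * (-ε) := le_trans h11 h12)
        rw [setIntegral_const, smul_eq_mul] at hmono
        calc (∫ x in K ∩ A, F x ∂μ) ≤ (μ (K ∩ A)).toReal * ((a ^ k) ^ 2 * (-ε)) := hmono
          _ = -(ε * (a ^ k) ^ 2) * c := by rw [hc]; ring
      have h9 : (∫ x in (K ∩ W) \ A, F x ∂μ) ≤ 0 := by
        apply setIntegral_nonpos ((hKm.inter hWm).diff hAm)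
        intro x hx
        have hfx : f x ≤ 0 := le_trans (hfmem x hx.1) (by linarith)
        have := mul_le_mul_of_nonneg_left hfx (sq_nonneg ((p x) ^ k))
        simpa using this
      linarith [hsplit2, h8, h9]
    have hID : (∫ x in K \ W, F x ∂μ) ≤ (b ^ k) ^ 2 * M * T := by
      have hmono := setIntegral_mono_on (hFint.mono_set Set.diff_subset)
        ((integrableOn_const_iff (C := (b ^ k) ^ 2 * M)).mpr (Or.inr (measure_lt_top μ _)))
        (hKm.diff hWm) (fun x hx => by
          have hQx : δ ≤ Qf x := le_of_not_gt hx.2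
          have hp0 : 0 ≤ p x := (hpK x hx.1).1
          have hpx : p x ≤ b := hpb x hQx
          have hpk2 : (p x ^ k) ^ 2 ≤ (b ^ k) ^ 2 :=
            pow_le_pow_left₀ (pow_nonneg hp0 k) (pow_le_pow_left₀ hp0 hpx k) 2
          have hfx : f x ≤ M := le_trans (le_abs_self _) (hMf x hx.1)
          have h11 : (p x ^ k) ^ 2 * f x ≤ (p x ^ k) ^ 2 * M :=
            mul_le_mul_of_nonneg_left hfx (sq_nonneg _)
          have h12 : (p x ^ k) ^ 2 * M ≤ (b ^ k) ^ 2 * M :=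
            mul_le_mul_of_nonneg_right hpk2 hMpos.le
          calc F x = (p x ^ k) ^ 2 * f x := rfl
            _ ≤ (b ^ k) ^ 2 * M := le_trans h11 h12)
      rw [setIntegral_const, smul_eq_mul] at hmono
      have hμle : (μ (K \ W)).toReal ≤ T :=
        ENNReal.toReal_mono (measure_ne_top μ K) (measure_mono Set.diff_subset)
      calc (∫ x in K \ W, F x ∂μ) ≤ (μ (K \ W)).toReal * ((b ^ k) ^ 2 * M) := hmono
        _ ≤ T * ((b ^ k) ^ 2 * M) :=
          mul_le_mul_of_nonneg_right hμle (by positivity)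
        _ = (b ^ k) ^ 2 * M * T := by ring
    have hfin : 0 ≤ -(ε * (a ^ k) ^ 2) * c + (b ^ k) ^ 2 * M * T := by
      linarith [hmain, hsplit, hIW, hID]
    have e1 : ε * c * (a ^ k) ^ 2 ≤ M * T * (b ^ k) ^ 2 := by linarith
    have hbk : b ^ k = (b / a) ^ k * a ^ k := by
      rw [div_pow, div_mul_cancel₀ _ (pow_ne_zero k ha0.ne')]
    have hr01 : 0 ≤ b / a := div_nonneg hb0 ha0.le
    have hr1 : b / a < 1 := by rw [div_lt_one ha0]; exact hba
    have e3 : ((b / a) ^ k) ^ 2 ≤ (b / a) ^ k := by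
      have h1 : (b / a) ^ k ≤ 1 := pow_le_one₀ hr01 hr1.le
      nlinarith [pow_nonneg hr01 k]
    have e4 : (b / a) ^ k * (M * T) < ε * c := (lt_div_iff₀ hMT).mp hk
    have hA2 : 0 < (a ^ k) ^ 2 := pow_pos (pow_pos ha0 k) 2
    have e5 : (b ^ k) ^ 2 = ((b / a) ^ k) ^ 2 * (a ^ k) ^ 2 := by rw [hbk]; ring
    have e6 : M * T * (b ^ k) ^ 2 ≤ M * T * ((b / a) ^ k * (a ^ k) ^ 2) := by
      rw [e5, ← mul_assoc, ← mul_assoc]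
      apply mul_le_mul_of_nonneg_right _ hA2.le
      exact mul_le_mul_of_nonneg_left e3 hMT.le
    have e7 : M * T * ((b / a) ^ k * (a ^ k) ^ 2) < ε * c * (a ^ k) ^ 2 := by
      have h13 := mul_lt_mul_of_pos_right e4 hA2
      calc M * T * ((b / a) ^ k * (a ^ k) ^ 2)
          = (b / a) ^ k * (M * T) * (a ^ k) ^ 2 := by ring
        _ < ε * c * (a ^ k) ^ 2 := h13
    linarith
  intro x hx
  obtain ⟨y, hyK, hle⟩ := hconc.exists_le_of_mem_convexHull (Set.subset_univ K) hx
  exact le_trans (key y hyK) hle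
end

section
/- Let K ⊆ ℝⁿ be closed, μ a finite Borel measure with supp μ = K and all moments y = (y_α) finite; assume also that for any sequence z with all moment matrices M_d(z) ⪰ 0 and Carleman-type bounds |z-moments| ≤ c·(2k)!, positivity of localizing matrices M_d(f y) for all d implies f ≥ 0 on K (Theorem: nonnegativity characterization). Consider a polynomial f ∈ ℝ[x] and the hierarchy λ_d = sup{λ ∈ ℝ : M_d((f−λ) y) ⪰ 0}. Then λ_d ≥ f* := inf{f(x) : x ∈ K} for every d, the sequence (λ_d) is nonincreasing, and λ_d ↓ f* as d → ∞. -/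
open MeasureTheory

/-- The localizing matrix `M_d(g y)` of `g` w.r.t. the moments `y` of `μ` is positive
semidefinite, expressed via its quadratic form on coefficient vectors of polynomials of
degree at most `d`. -/
def LocPSD {n : ℕ} (μ : Measure (Fin n → ℝ)) (d : ℕ) (g : MvPolynomial (Fin n) ℝ) : Prop :=
  ∀ p : MvPolynomial (Fin n) ℝ, p.totalDegree ≤ d →
    0 ≤ ∑ α ∈ p.support, ∑ β ∈ p.support, p.coeff α * p.coeff β *
        (∑ γ ∈ g.support, g.coeff γ * ∫ x, ∏ i, (x i) ^ ((α + β + γ) i) ∂μ)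

open MvPolynomial

lemma key {n : ℕ} (μ : Measure (Fin n → ℝ))
    (hmom : ∀ σ : Fin n →₀ ℕ, Integrable (fun x => ∏ i, (x i) ^ (σ i)) μ)
    (g p : MvPolynomial (Fin n) ℝ) :
    ∑ α ∈ p.support, ∑ β ∈ p.support, p.coeff α * p.coeff β *
        (∑ γ ∈ g.support, g.coeff γ * ∫ x, ∏ i, (x i) ^ ((α + β + γ) i) ∂μ)
      = ∫ x, (MvPolynomial.eval x p)^2 * MvPolynomial.eval x g ∂μ := by
  have hpt : ∀ x : Fin n → ℝ, (MvPolynomial.eval x p)^2 * MvPolynomial.eval x g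
      = ∑ α ∈ p.support, ∑ β ∈ p.support, ∑ γ ∈ g.support,
          p.coeff α * p.coeff β * g.coeff γ * ∏ i, (x i) ^ ((α + β + γ) i) := by
    intro x
    rw [sq, eval_eq' x p, eval_eq' x g, Finset.sum_mul_sum, Finset.sum_mul]
    refine Finset.sum_congr rfl fun α _ => ?_
    rw [Finset.sum_mul]
    refine Finset.sum_congr rfl fun β _ => ?_
    rw [Finset.mul_sum]
    refine Finset.sum_congr rfl fun γ _ => ?_
    simp only [Finsupp.coe_add, Pi.add_apply, pow_add, Finset.prod_mul_distrib]
    ring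
  have hint : ∀ (α β γ : Fin n →₀ ℕ),
      Integrable (fun x => p.coeff α * p.coeff β * g.coeff γ * ∏ i, (x i) ^ ((α+β+γ) i)) μ :=
    fun α β γ => (hmom _).const_mul _
  simp_rw [hpt]
  rw [integral_finset_sum _ (fun α _ => integrable_finset_sum _
    (fun β _ => integrable_finset_sum _ fun γ _ => hint α β γ))]
  refine Finset.sum_congr rfl fun α _ => ?_
  rw [integral_finset_sum _ (fun β _ => integrable_finset_sum _ fun γ _ => hint α β γ)]
  refine Finset.sum_congr rfl fun β _ => ?_
  rw [integral_finset_sum _ (fun γ _ => hint α β γ), Finset.mul_sum]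
  refine Finset.sum_congr rfl fun γ _ => ?_
  rw [integral_const_mul]
  ring

lemma integrable_eval {n : ℕ} (μ : Measure (Fin n → ℝ))
    (hmom : ∀ σ : Fin n →₀ ℕ, Integrable (fun x => ∏ i, (x i) ^ (σ i)) μ)
    (q : MvPolynomial (Fin n) ℝ) :
    Integrable (fun x => MvPolynomial.eval x q) μ := by
  have : (fun x => MvPolynomial.eval x q)
      = fun x => ∑ d ∈ q.support, q.coeff d * ∏ i, (x i) ^ (d i) := by
    funext x; rw [eval_eq' x q]
  rw [this]
  exact integrable_finset_sum _ fun d _ => (hmom d).const_mul _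

/-- nonnegativity on the support gives LocPSD -/
lemma locPSD_of_nonneg {n : ℕ} {K : Set (Fin n → ℝ)} {μ : Measure (Fin n → ℝ)}
    (hsupp : IsMeasureSupport μ K)
    (hmom : ∀ σ : Fin n →₀ ℕ, Integrable (fun x => ∏ i, (x i) ^ (σ i)) μ)
    {g : MvPolynomial (Fin n) ℝ} (hg : ∀ x ∈ K, 0 ≤ MvPolynomial.eval x g)
    (d : ℕ) : LocPSD μ d g := by
  intro p hp
  rw [key μ hmom g p]
  have hK : ∀ᵐ x ∂μ, x ∈ K := by
    rw [ae_iff]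
    exact hsupp.2.1
  refine integral_nonneg_of_ae ?_
  filter_upwards [hK] with x hx
  exact mul_nonneg (sq_nonneg _) (hg x hx)

/-- downward closedness in t -/
lemma locPSD_down {n : ℕ} {μ : Measure (Fin n → ℝ)}
    (hmom : ∀ σ : Fin n →₀ ℕ, Integrable (fun x => ∏ i, (x i) ^ (σ i)) μ)
    {f : MvPolynomial (Fin n) ℝ} {t t' : ℝ} (htt : t' ≤ t) {d : ℕ}
    (h : LocPSD μ d (f - MvPolynomial.C t)) : LocPSD μ d (f - MvPolynomial.C t') := by
  intro p hp
  have h1 := h p hp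
  rw [key μ hmom] at h1 ⊢
  have e : ∀ x : Fin n → ℝ, (MvPolynomial.eval x p)^2 * MvPolynomial.eval x (f - MvPolynomial.C t')
      = (MvPolynomial.eval x p)^2 * MvPolynomial.eval x (f - MvPolynomial.C t)
        + (t - t') * (MvPolynomial.eval x p)^2 := by
    intro x; simp only [map_sub, eval_C]; ring
  have hi1 : Integrable (fun x => (MvPolynomial.eval x p)^2
      * MvPolynomial.eval x (f - MvPolynomial.C t)) μ := by
    have := integrable_eval μ hmom (p^2 * (f - MvPolynomial.C t))
    simpa [map_mul, map_pow] using this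
  have hi2 : Integrable (fun x => (t - t') * (MvPolynomial.eval x p)^2) μ := by
    have := (integrable_eval μ hmom (p^2)).const_mul (t - t')
    simpa [map_pow] using this
  simp_rw [e]
  rw [integral_add hi1 hi2, integral_const_mul]
  have h2 : 0 ≤ ∫ x, (MvPolynomial.eval x p)^2 ∂μ :=
    integral_nonneg fun x => sq_nonneg _
  nlinarith [sub_nonneg.mpr htt]

theorem stmt14 {n : ℕ} (K : Set (Fin n → ℝ)) (hKcl : IsClosed K) (hKne : K.Nonempty)
    (μ : Measure (Fin n → ℝ)) [IsFiniteMeasure μ] (hsupp : IsMeasureSupport μ K)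
    (hmom : ∀ σ : Fin n →₀ ℕ, Integrable (fun x => ∏ i, (x i) ^ (σ i)) μ)
    (hchar : ∀ g : MvPolynomial (Fin n) ℝ,
      (∀ d, LocPSD μ d g) → ∀ x ∈ K, 0 ≤ MvPolynomial.eval x g)
    (f : MvPolynomial (Fin n) ℝ) (fstar : ℝ)
    (hfstar : IsGLB ((fun x => MvPolynomial.eval x f) '' K) fstar)
    (lam : ℕ → ℝ)
    (hlam : ∀ d, IsLUB {t : ℝ | LocPSD μ d (f - MvPolynomial.C t)} (lam d)) :
    (∀ d, fstar ≤ lam d) ∧ Antitone lam ∧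
      Filter.Tendsto lam Filter.atTop (nhds fstar) := by
  -- fstar is feasible at every level
  have hmem : ∀ d, LocPSD μ d (f - MvPolynomial.C fstar) := by
    intro d
    refine locPSD_of_nonneg hsupp hmom (fun x hx => ?_) d
    have := hfstar.1 ⟨x, hx, rfl⟩
    simp only [map_sub, eval_C, sub_nonneg]
    exact this
  have hge : ∀ d, fstar ≤ lam d := fun d => (hlam d).1 (hmem d)
  -- antitone
  have hanti : Antitone lam := by
    refine antitone_nat_of_succ_le fun d => ?_
    refine (hlam (d+1)).2 fun t ht => (hlam d).1 ?_
    exact fun p hp => ht p (hp.trans (Nat.le_succ d))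
  refine ⟨hge, hanti, ?_⟩
  -- below the limit, feasible at all levels
  have hbdd : BddBelow (Set.range lam) := ⟨fstar, by rintro _ ⟨d, rfl⟩; exact hge d⟩
  have htend := tendsto_atTop_ciInf hanti hbdd
  have hlow : fstar ≤ ⨅ d, lam d := le_ciInf hge
  have hupp : (⨅ d, lam d) ≤ fstar := by
    by_contra hcon
    push_neg at hcon
    obtain ⟨c, hc1, hc2⟩ := exists_between hcon
    -- c < lam d for all d, so c is feasible at all levels
    have hfeas : ∀ d, LocPSD μ d (f - MvPolynomial.C c) := by
      intro d
      have hcd : c < lam d := lt_of_lt_of_le hc2 (ciInf_le hbdd d)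
      obtain ⟨t, ht, hct, _⟩ := (hlam d).exists_between hcd
      exact locPSD_down hmom hct.le ht
    have := hchar _ hfeas
    have hlb : c ∈ lowerBounds ((fun x => MvPolynomial.eval x f) '' K) := by
      rintro _ ⟨x, hx, rfl⟩
      have := this x hx
      simp only [map_sub, eval_C, sub_nonneg] at this
      exact this
    exact absurd (hfstar.2 hlb) (not_le.mpr hc1)
  rw [show fstar = ⨅ d, lam d from le_antisymm hlow hupp]
  exact htend
end
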